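/- Let Ω be a probability space, n a natural number, and b = 2^m. Let H1, H2 : Ω → (Fin n → Fin b) be independent random functions such that each of H1 and H2 is a pairwise independent uniform family (for each i, the value at i is uniformly distributed on Fin b, and values at distinct indices are independent). Then the combined random function G : Fin n × Fin n → Fin b given by G(i, j) = H1(i) XOR H2(j) is a pairwise independent uniform family on Fin n × Fin n: for every (i,j), G(i,j) is uniform on Fin b, and for every (i,j) ≠ (i',j') and every u, v ∈ Fin b, Pr[G(i,j) = u and G(i',j') = v] = 1/b². -/

import Mathlib

open MeasureTheory
open scoped ENNReal ProbabilityTheory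

/-- Bitwise XOR on `Fin (2^m)`. -/
def fxor {m : ℕ} (i j : Fin (2^m)) : Fin (2^m) :=
  ⟨i.val ^^^ j.val, Nat.xor_lt_two_pow i.isLt j.isLt⟩

lemma fxor_eq_iff_right {m : ℕ} (a c u : Fin (2^m)) : fxor a c = u ↔ c = fxor a u := by
  simp only [fxor, Fin.ext_iff]
  constructor
  · intro h; rw [← h]; simp [Nat.xor_xor_cancel_left]
  · intro h; rw [h]; simp [Nat.xor_xor_cancel_left]

lemma fxor_eq_iff_left {m : ℕ} (a c u : Fin (2^m)) : fxor a c = u ↔ a = fxor u c := by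
  simp only [fxor, Fin.ext_iff]
  constructor
  · intro h; rw [← h]; simp [Nat.xor_xor_cancel_right]
  · intro h; rw [h]; simp [Nat.xor_xor_cancel_right]

section helpers
variable {Ω : Type*} [MeasureSpace Ω]

lemma partition_nullMeasurable [IsProbabilityMeasure (ℙ : Measure Ω)]
    {ι : Type*} [Fintype ι] (A : ι → Set Ω)
    (hcover : (⋃ k, A k) = Set.univ)
    (hsum : ∑ k, ℙ (A k) = 1) (k : ι) :
    NullMeasurableSet (A k) (ℙ : Measure Ω) := by
  classical
  set E : ι → Set Ω := fun k => toMeasurable ℙ (A k) with hE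
  have hEmeas : ∀ k, MeasurableSet (E k) := fun k => measurableSet_toMeasurable _ _
  have hEμ : ∀ k, ℙ (E k) = ℙ (A k) := fun k => measure_toMeasurable _
  have hEsub : ∀ k, A k ⊆ E k := fun k => subset_toMeasurable _ _
  have hUnionE : ℙ (⋃ k, E k) = 1 := by
    have h1 : (⋃ k, A k) ⊆ ⋃ k, E k := Set.iUnion_mono hEsub
    have := measure_mono (μ := (ℙ : Measure Ω)) h1
    rw [hcover, measure_univ] at this
    exact le_antisymm prob_le_one this
  set B : Set Ω := ⋃ k' ∈ ({k}ᶜ : Finset ι), E k' with hB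
  have hBmeas : MeasurableSet B := by
    apply Finset.measurableSet_biUnion
    intro k' _; exact hEmeas k'
  have hEB : E k ∪ B = ⋃ k', E k' := by
    ext ω
    simp only [Set.mem_union, Set.mem_iUnion, hB, Finset.mem_compl, Finset.mem_singleton,
      exists_prop]
    constructor
    · rintro (h | ⟨k', _, h⟩)
      exacts [⟨k, h⟩, ⟨k', h⟩]
    · rintro ⟨k', h⟩
      by_cases hk : k' = k
      · subst hk; exact Or.inl h
      · exact Or.inr ⟨k', hk, h⟩
  have hBle : ℙ B ≤ ∑ k' ∈ ({k}ᶜ : Finset ι), ℙ (E k') := measure_biUnion_finset_le _ _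
  have key : ℙ (E k ∩ B) = 0 := by
    have h := measure_union_add_inter (μ := (ℙ : Measure Ω)) (E k) hBmeas
    rw [hEB, hUnionE] at h
    have hsum' : ℙ (E k) + ∑ k' ∈ ({k}ᶜ : Finset ι), ℙ (E k') = 1 := by
      simp only [hEμ]
      rw [← hsum, add_comm, ← Finset.sum_singleton (fun k' => ℙ (A k')) k,
        Finset.sum_compl_add_sum {k} (fun k' => ℙ (A k'))]
    have hle : (1 : ℝ≥0∞) + ℙ (E k ∩ B) ≤ 1 := by
      calc (1:ℝ≥0∞) + ℙ (E k ∩ B) = ℙ (E k) + ℙ B := h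
        _ ≤ ℙ (E k) + ∑ k' ∈ ({k}ᶜ : Finset ι), ℙ (E k') := add_le_add (le_refl _) hBle
        _ = 1 := hsum'
    have h2 : (1:ℝ≥0∞) + ℙ (E k ∩ B) ≤ 1 + 0 := by simpa using hle
    have := ENNReal.le_of_add_le_add_left (by norm_num : (1:ℝ≥0∞) ≠ ⊤) h2
    exact le_antisymm this zero_le
  have hdiff : ℙ (E k \ A k) = 0 := by
    refine measure_mono_null ?_ key
    intro ω hω
    rcases hω with ⟨hωE, hωA⟩
    have hωU : ω ∈ ⋃ k', A k' := hcover ▸ Set.mem_univ ω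
    rcases Set.mem_iUnion.1 hωU with ⟨k', hk'⟩
    have hne : k' ≠ k := fun h => hωA (h ▸ hk')
    exact ⟨hωE, Set.mem_biUnion (Finset.mem_compl.2
      (fun h => hne (Finset.mem_singleton.1 h))) (hEsub k' hk')⟩
  refine ⟨E k, hEmeas k, ?_⟩
  rw [MeasureTheory.ae_eq_set]
  constructor
  · have : A k \ E k = ∅ := Set.diff_eq_empty.2 (hEsub k)
    simp [this]
  · exact hdiff

lemma nm_preimage {γ : Type*} [Fintype γ] (H : Ω → γ)
    (hNM : ∀ f, NullMeasurableSet {ω | H ω = f} (ℙ : Measure Ω))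
    (P : γ → Prop) : NullMeasurableSet {ω | P (H ω)} (ℙ : Measure Ω) := by
  have h : {ω | P (H ω)} = ⋃ f : γ, ⋃ _ : P f, {ω | H ω = f} := by
    ext ω; simp
  rw [h]
  exact NullMeasurableSet.iUnion fun f => NullMeasurableSet.iUnion fun _ => hNM f

lemma measure_preimage_eq_sum {γ : Type*} [Fintype γ] [DecidableEq γ] (H : Ω → γ)
    (hNM : ∀ f, NullMeasurableSet {ω | H ω = f} (ℙ : Measure Ω))
    (P : γ → Prop) [DecidablePred P] :
    ℙ {ω | P (H ω)} = ∑ f ∈ Finset.univ.filter P, ℙ {ω | H ω = f} := by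
  have h : {ω | P (H ω)} = ⋃ f ∈ Finset.univ.filter P, {ω | H ω = f} := by
    ext ω; simp [eq_comm]
  rw [h, measure_biUnion_finset₀]
  · intro f _ g _ hfg
    refine Disjoint.aedisjoint (Set.disjoint_left.2 ?_)
    intro ω h1 h2
    exact hfg (h1.symm.trans h2)
  · exact fun f _ => hNM f

lemma indep_lift {γ δ : Type*} [Fintype γ] [Fintype δ] [DecidableEq γ] [DecidableEq δ]
    (H1 : Ω → γ) (H2 : Ω → δ)
    (hNM1 : ∀ f, NullMeasurableSet {ω | H1 ω = f} (ℙ : Measure Ω))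
    (hNM2 : ∀ g, NullMeasurableSet {ω | H2 ω = g} (ℙ : Measure Ω))
    (hindep : ∀ f g, ℙ {ω | H1 ω = f ∧ H2 ω = g} = ℙ {ω | H1 ω = f} * ℙ {ω | H2 ω = g})
    (P : γ → Prop) (Q : δ → Prop) [DecidablePred P] [DecidablePred Q] :
    ℙ {ω | P (H1 ω) ∧ Q (H2 ω)} = ℙ {ω | P (H1 ω)} * ℙ {ω | Q (H2 ω)} := by
  have h : {ω | P (H1 ω) ∧ Q (H2 ω)} =
      ⋃ fg ∈ (Finset.univ.filter P) ×ˢ (Finset.univ.filter Q),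
        {ω | H1 ω = fg.1 ∧ H2 ω = fg.2} := by
    ext ω
    simp only [Set.mem_setOf_eq, Set.mem_iUnion, Finset.mem_product, Finset.mem_filter,
      Finset.mem_univ, true_and, exists_prop, Prod.exists]
    constructor
    · rintro ⟨hP, hQ⟩; exact ⟨H1 ω, H2 ω, ⟨hP, hQ⟩, rfl, rfl⟩
    · rintro ⟨f, g, ⟨hP, hQ⟩, rfl, rfl⟩; exact ⟨hP, hQ⟩
  rw [h, measure_biUnion_finset₀]
  · rw [Finset.sum_product]
    simp only [hindep]
    rw [← Finset.sum_mul_sum, measure_preimage_eq_sum H1 hNM1 P,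
      measure_preimage_eq_sum H2 hNM2 Q]
  · rintro ⟨f, g⟩ _ ⟨f', g'⟩ _ hne
    refine Disjoint.aedisjoint (Set.disjoint_left.2 ?_)
    rintro ω ⟨h1, h2⟩ ⟨h3, h4⟩
    exact hne (Prod.ext (h1.symm.trans h3) (h2.symm.trans h4))
  · rintro ⟨f, g⟩ _
    exact (hNM1 f).inter (hNM2 g)

end helpers

theorem xor_combined_hash_pairwise_independent_uniform
    {Ω : Type*} [MeasureSpace Ω] [IsProbabilityMeasure (ℙ : Measure Ω)]
    (n m : ℕ) (H1 H2 : Ω → Fin n → Fin (2^m))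
    -- H1 and H2 are independent (as function-valued random variables):
    (hindep : ∀ f g : Fin n → Fin (2^m),
      ℙ {ω | H1 ω = f ∧ H2 ω = g} = ℙ {ω | H1 ω = f} * ℙ {ω | H2 ω = g})
    -- H1 is a pairwise independent uniform family:
    (hH1unif : ∀ i u, ℙ {ω | H1 ω i = u} = 1 / (2^m : ℝ≥0∞))
    (hH1pair : ∀ i i', i ≠ i' → ∀ u v,
      ℙ {ω | H1 ω i = u ∧ H1 ω i' = v} = ℙ {ω | H1 ω i = u} * ℙ {ω | H1 ω i' = v})
    -- H2 is a pairwise independent uniform family: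
    (hH2unif : ∀ j u, ℙ {ω | H2 ω j = u} = 1 / (2^m : ℝ≥0∞))
    (hH2pair : ∀ j j', j ≠ j' → ∀ u v,
      ℙ {ω | H2 ω j = u ∧ H2 ω j' = v} = ℙ {ω | H2 ω j = u} * ℙ {ω | H2 ω j' = v}) :
    (∀ i j : Fin n, ∀ u : Fin (2^m),
      ℙ {ω | fxor (H1 ω i) (H2 ω j) = u} = 1 / (2^m : ℝ≥0∞)) ∧
    (∀ i j i' j' : Fin n, (i, j) ≠ (i', j') → ∀ u v : Fin (2^m),
      ℙ {ω | fxor (H1 ω i) (H2 ω j) = u ∧ fxor (H1 ω i') (H2 ω j') = v}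
        = 1 / ((2^m : ℝ≥0∞))^2) := by
  classical
  have hx0 : ((2:ℝ≥0∞)^m) ≠ 0 := pow_ne_zero m (by norm_num)
  have hxt : ((2:ℝ≥0∞)^m) ≠ ⊤ := ENNReal.pow_ne_top (by norm_num)
  -- coordinate events are null measurable
  have coordNM1 : ∀ (i : Fin n) (a : Fin (2^m)),
      NullMeasurableSet {ω | H1 ω i = a} (ℙ : Measure Ω) := by
    intro i a
    refine partition_nullMeasurable (fun a => {ω | H1 ω i = a}) ?_ ?_ a
    · ext ω; simp
    · simp only [hH1unif i]
      rw [Finset.sum_const, Finset.card_univ, Fintype.card_fin, nsmul_eq_mul,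
        Nat.cast_pow, Nat.cast_ofNat, one_div, ENNReal.mul_inv_cancel hx0 hxt]
  have coordNM2 : ∀ (j : Fin n) (a : Fin (2^m)),
      NullMeasurableSet {ω | H2 ω j = a} (ℙ : Measure Ω) := by
    intro j a
    refine partition_nullMeasurable (fun a => {ω | H2 ω j = a}) ?_ ?_ a
    · ext ω; simp
    · simp only [hH2unif j]
      rw [Finset.sum_const, Finset.card_univ, Fintype.card_fin, nsmul_eq_mul,
        Nat.cast_pow, Nat.cast_ofNat, one_div, ENNReal.mul_inv_cancel hx0 hxt]
  -- full cylinder events are null measurable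
  have fullNM1 : ∀ f, NullMeasurableSet {ω | H1 ω = f} (ℙ : Measure Ω) := by
    intro f
    have h : {ω | H1 ω = f} = ⋂ i, {ω | H1 ω i = f i} := by
      ext ω; simp [funext_iff]
    rw [h]
    exact NullMeasurableSet.iInter fun i => coordNM1 i (f i)
  have fullNM2 : ∀ g, NullMeasurableSet {ω | H2 ω = g} (ℙ : Measure Ω) := by
    intro g
    have h : {ω | H2 ω = g} = ⋂ j, {ω | H2 ω j = g j} := by
      ext ω; simp [funext_iff]
    rw [h]
    exact NullMeasurableSet.iInter fun j => coordNM2 j (g j)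
  have hlift := fun P Q => indep_lift H1 H2 fullNM1 fullNM2 hindep P Q
  -- derived joint probabilities
  have jointUU : ∀ (i j : Fin n) (a c : Fin (2^m)),
      ℙ {ω | H1 ω i = a ∧ H2 ω j = c}
        = ℙ {ω | H1 ω i = a} * ℙ {ω | H2 ω j = c} :=
    fun i j a c => hlift (fun f => f i = a) (fun g => g j = c)
  have jointUP : ∀ (i j j' : Fin n) (a c c' : Fin (2^m)),
      ℙ {ω | H1 ω i = a ∧ (H2 ω j = c ∧ H2 ω j' = c')}
        = ℙ {ω | H1 ω i = a} * ℙ {ω | H2 ω j = c ∧ H2 ω j' = c'} :=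
    fun i j j' a c c' => hlift (fun f => f i = a) (fun g => g j = c ∧ g j' = c')
  have jointPU : ∀ (i i' j : Fin n) (a a' c : Fin (2^m)),
      ℙ {ω | (H1 ω i = a ∧ H1 ω i' = a') ∧ H2 ω j = c}
        = ℙ {ω | H1 ω i = a ∧ H1 ω i' = a'} * ℙ {ω | H2 ω j = c} :=
    fun i i' j a a' c => hlift (fun f => f i = a ∧ f i' = a') (fun g => g j = c)
  have jointPP : ∀ (i i' j j' : Fin n) (a a' c c' : Fin (2^m)),
      ℙ {ω | (H1 ω i = a ∧ H1 ω i' = a') ∧ (H2 ω j = c ∧ H2 ω j' = c')}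
        = ℙ {ω | H1 ω i = a ∧ H1 ω i' = a'} * ℙ {ω | H2 ω j = c ∧ H2 ω j' = c'} :=
    fun i i' j j' a a' c c' =>
      hlift (fun f => f i = a ∧ f i' = a') (fun g => g j = c ∧ g j' = c')
  constructor
  · -- uniformity
    intro i j u
    have hset : {ω | fxor (H1 ω i) (H2 ω j) = u}
        = ⋃ a : Fin (2^m), {ω | H1 ω i = a ∧ H2 ω j = fxor a u} := by
      ext ω
      simp only [Set.mem_setOf_eq, Set.mem_iUnion]
      constructor
      · intro h; exact ⟨H1 ω i, rfl, (fxor_eq_iff_right _ _ _).1 h⟩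
      · rintro ⟨a, rfl, hc⟩; exact (fxor_eq_iff_right _ _ _).2 hc
    rw [hset, measure_iUnion₀, tsum_fintype]
    · have : ∀ a : Fin (2^m), ℙ {ω | H1 ω i = a ∧ H2 ω j = fxor a u}
          = 1/(2:ℝ≥0∞)^m * (1/(2:ℝ≥0∞)^m) := by
        intro a
        rw [jointUU, hH1unif, hH2unif]
      simp only [this]
      rw [Finset.sum_const, Finset.card_univ, Fintype.card_fin, nsmul_eq_mul,
        Nat.cast_pow, Nat.cast_ofNat]
      simp only [one_div]
      rw [← mul_assoc, ENNReal.mul_inv_cancel hx0 hxt, one_mul]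
    · intro a a' haa'
      refine Disjoint.aedisjoint (Set.disjoint_left.2 ?_)
      rintro ω ⟨h1, _⟩ ⟨h2, _⟩
      exact haa' (h1.symm.trans h2)
    · intro a
      exact ((nm_preimage H1 fullNM1 (fun f => f i = a)).inter
        (nm_preimage H2 fullNM2 (fun g => g j = fxor a u)))
  · -- pairwise independence
    intro i j i' j' hne u v
    by_cases hi : i = i'
    · by_cases hj : j = j'
      · exact absurd (by rw [hi, hj]) hne
      · -- i = i', j ≠ j'
        subst hi
        have hset : {ω | fxor (H1 ω i) (H2 ω j) = u ∧ fxor (H1 ω i) (H2 ω j') = v}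
            = ⋃ a : Fin (2^m),
              {ω | H1 ω i = a ∧ (H2 ω j = fxor a u ∧ H2 ω j' = fxor a v)} := by
          ext ω
          simp only [Set.mem_setOf_eq, Set.mem_iUnion]
          constructor
          · rintro ⟨h1, h2⟩
            exact ⟨H1 ω i, rfl, (fxor_eq_iff_right _ _ _).1 h1,
              (fxor_eq_iff_right _ _ _).1 h2⟩
          · rintro ⟨a, rfl, hc, hc'⟩
            exact ⟨(fxor_eq_iff_right _ _ _).2 hc, (fxor_eq_iff_right _ _ _).2 hc'⟩
        rw [hset, measure_iUnion₀, tsum_fintype]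
        · have : ∀ a : Fin (2^m),
              ℙ {ω | H1 ω i = a ∧ (H2 ω j = fxor a u ∧ H2 ω j' = fxor a v)}
              = 1/(2:ℝ≥0∞)^m * (1/(2:ℝ≥0∞)^m * (1/(2:ℝ≥0∞)^m)) := by
            intro a
            rw [jointUP, hH1unif, hH2pair j j' hj, hH2unif, hH2unif]
          simp only [this]
          rw [Finset.sum_const, Finset.card_univ, Fintype.card_fin, nsmul_eq_mul,
            Nat.cast_pow, Nat.cast_ofNat]
          simp only [one_div]
          rw [← mul_assoc, ENNReal.mul_inv_cancel hx0 hxt, one_mul, pow_two,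
            ENNReal.mul_inv (Or.inl hx0) (Or.inl hxt)]
        · intro a a' haa'
          refine Disjoint.aedisjoint (Set.disjoint_left.2 ?_)
          rintro ω ⟨h1, _⟩ ⟨h2, _⟩
          exact haa' (h1.symm.trans h2)
        · intro a
          exact ((nm_preimage H1 fullNM1 (fun f => f i = a)).inter
            (nm_preimage H2 fullNM2 (fun g => g j = fxor a u ∧ g j' = fxor a v)))
    · by_cases hj : j = j'
      · -- j = j', i ≠ i'
        subst hj
        have hset : {ω | fxor (H1 ω i) (H2 ω j) = u ∧ fxor (H1 ω i') (H2 ω j) = v}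
            = ⋃ c : Fin (2^m),
              {ω | (H1 ω i = fxor u c ∧ H1 ω i' = fxor v c) ∧ H2 ω j = c} := by
          ext ω
          simp only [Set.mem_setOf_eq, Set.mem_iUnion]
          constructor
          · rintro ⟨h1, h2⟩
            exact ⟨H2 ω j, ⟨(fxor_eq_iff_left _ _ _).1 h1,
              (fxor_eq_iff_left _ _ _).1 h2⟩, rfl⟩
          · rintro ⟨c, ⟨ha, ha'⟩, rfl⟩
            exact ⟨(fxor_eq_iff_left _ _ _).2 ha, (fxor_eq_iff_left _ _ _).2 ha'⟩
        rw [hset, measure_iUnion₀, tsum_fintype]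
        · have : ∀ c : Fin (2^m),
              ℙ {ω | (H1 ω i = fxor u c ∧ H1 ω i' = fxor v c) ∧ H2 ω j = c}
              = 1/(2:ℝ≥0∞)^m * (1/(2:ℝ≥0∞)^m) * (1/(2:ℝ≥0∞)^m) := by
            intro c
            rw [jointPU, hH1pair i i' hi, hH1unif, hH1unif, hH2unif]
          simp only [this]
          rw [Finset.sum_const, Finset.card_univ, Fintype.card_fin, nsmul_eq_mul,
            Nat.cast_pow, Nat.cast_ofNat]
          simp only [one_div]
          rw [show ((2:ℝ≥0∞)^m)⁻¹ * ((2:ℝ≥0∞)^m)⁻¹ * ((2:ℝ≥0∞)^m)⁻¹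
              = ((2:ℝ≥0∞)^m)⁻¹ * (((2:ℝ≥0∞)^m)⁻¹ * ((2:ℝ≥0∞)^m)⁻¹) from mul_assoc _ _ _,
            ← mul_assoc, ENNReal.mul_inv_cancel hx0 hxt, one_mul, pow_two,
            ENNReal.mul_inv (Or.inl hx0) (Or.inl hxt)]
        · intro c c' hcc'
          refine Disjoint.aedisjoint (Set.disjoint_left.2 ?_)
          rintro ω ⟨_, h1⟩ ⟨_, h2⟩
          exact hcc' (h1.symm.trans h2)
        · intro c
          exact ((nm_preimage H1 fullNM1 (fun f => f i = fxor u c ∧ f i' = fxor v c)).inter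
            (nm_preimage H2 fullNM2 (fun g => g j = c)))
      · -- i ≠ i', j ≠ j'
        have hset : {ω | fxor (H1 ω i) (H2 ω j) = u ∧ fxor (H1 ω i') (H2 ω j') = v}
            = ⋃ p : Fin (2^m) × Fin (2^m),
              {ω | (H1 ω i = p.1 ∧ H1 ω i' = p.2) ∧
                (H2 ω j = fxor p.1 u ∧ H2 ω j' = fxor p.2 v)} := by
          ext ω
          simp only [Set.mem_setOf_eq, Set.mem_iUnion]
          constructor
          · rintro ⟨h1, h2⟩
            exact ⟨(H1 ω i, H1 ω i'), ⟨rfl, rfl⟩, (fxor_eq_iff_right _ _ _).1 h1,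
              (fxor_eq_iff_right _ _ _).1 h2⟩
          · rintro ⟨⟨a, a'⟩, ⟨ha, ha'⟩, hc, hc'⟩
            rw [ha, ha']
            exact ⟨(fxor_eq_iff_right _ _ _).2 hc, (fxor_eq_iff_right _ _ _).2 hc'⟩
        rw [hset, measure_iUnion₀, tsum_fintype]
        · have : ∀ p : Fin (2^m) × Fin (2^m),
              ℙ {ω | (H1 ω i = p.1 ∧ H1 ω i' = p.2) ∧
                (H2 ω j = fxor p.1 u ∧ H2 ω j' = fxor p.2 v)}
              = (1/(2:ℝ≥0∞)^m * (1/(2:ℝ≥0∞)^m)) * (1/(2:ℝ≥0∞)^m * (1/(2:ℝ≥0∞)^m)) := by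
            intro p
            rw [jointPP, hH1pair i i' hi, hH2pair j j' hj, hH1unif, hH1unif,
              hH2unif, hH2unif]
          simp only [this]
          rw [Finset.sum_const, Finset.card_univ, Fintype.card_prod, Fintype.card_fin,
            nsmul_eq_mul, Nat.cast_mul, Nat.cast_pow, Nat.cast_ofNat]
          simp only [one_div]
          rw [show ((2:ℝ≥0∞)^m * 2^m) * ((((2:ℝ≥0∞)^m)⁻¹ * ((2:ℝ≥0∞)^m)⁻¹) *
              (((2:ℝ≥0∞)^m)⁻¹ * ((2:ℝ≥0∞)^m)⁻¹))
              = ((2:ℝ≥0∞)^m * ((2:ℝ≥0∞)^m)⁻¹) * (((2:ℝ≥0∞)^m * ((2:ℝ≥0∞)^m)⁻¹) *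
                (((2:ℝ≥0∞)^m)⁻¹ * ((2:ℝ≥0∞)^m)⁻¹)) by ring,
            ENNReal.mul_inv_cancel hx0 hxt, one_mul, one_mul, pow_two,
            ENNReal.mul_inv (Or.inl hx0) (Or.inl hxt)]
        · intro p q hpq
          refine Disjoint.aedisjoint (Set.disjoint_left.2 ?_)
          rintro ω ⟨⟨h1, h2⟩, _⟩ ⟨⟨h3, h4⟩, _⟩
          exact hpq (Prod.ext (h1.symm.trans h3) (h2.symm.trans h4))
        · intro p
          exact ((nm_preimage H1 fullNM1 (fun f => f i = p.1 ∧ f i' = p.2)).inter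
            (nm_preimage H2 fullNM2 (fun g => g j = fxor p.1 u ∧ g j' = fxor p.2 v)))
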